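/- Uniform convergence of Cauchy surfaces is Lorentz invariant: if Cauchy surfaces Σ_n, given as graphs of 1-Lipschitz functions f_n : ℝ³ → ℝ, converge uniformly to Σ = graph(f), and g is a proper Poincaré transformation such that g[Σ_n] and g[Σ] are again graphs of 1-Lipschitz functions g·f_n and g·f, then g·f_n converges uniformly to g·f; moreover the uniform distance scales by at most the factor (βγ + γ) where β is the boost velocity of g. -/

import Mathlib

open Filter

noncomputable section

/-- The standard Lorentz boost in the x¹-direction with velocity β and Lorentz factor γ,
acting on points (t, 𝐱) of Minkowski space ℝ × ℝ³. -/
def boost (β γ : ℝ) (p : ℝ × EuclideanSpace ℝ (Fin 3)) : ℝ × EuclideanSpace ℝ (Fin 3) :=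
  (γ * p.1 + β * γ * p.2 0,
    (WithLp.equiv 2 (Fin 3 → ℝ)).symm
      (Function.update ((WithLp.equiv 2 (Fin 3 → ℝ)) p.2) 0 (β * γ * p.1 + γ * p.2 0)))

/-- A proper Poincaré transformation: translation ∘ rotation ∘ boost. -/
def poincare (β γ : ℝ) (R : EuclideanSpace ℝ (Fin 3) ≃ₗᵢ[ℝ] EuclideanSpace ℝ (Fin 3))
    (c : ℝ × EuclideanSpace ℝ (Fin 3)) (p : ℝ × EuclideanSpace ℝ (Fin 3)) :
    ℝ × EuclideanSpace ℝ (Fin 3) :=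
  ((boost β γ p).1 + c.1, R (boost β γ p).2 + c.2)

lemma update_sub_single (y : EuclideanSpace ℝ (Fin 3)) (a b : ℝ) :
    (WithLp.equiv 2 (Fin 3 → ℝ)).symm (Function.update ((WithLp.equiv 2 (Fin 3 → ℝ)) y) 0 a)
      = (WithLp.equiv 2 (Fin 3 → ℝ)).symm (Function.update ((WithLp.equiv 2 (Fin 3 → ℝ)) y) 0 b)
        + EuclideanSpace.single 0 (a - b) := by
  ext i
  rw [PiLp.add_apply, EuclideanSpace.single_apply, WithLp.equiv_symm_apply,
    WithLp.ofLp_toLp, WithLp.ofLp_toLp, Function.update_apply, Function.update_apply]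
  by_cases h : i = 0 <;> simp [h]

/-- uniform convergence of Cauchy surfaces (graphs of 1-Lipschitz functions)
is Lorentz invariant, and the uniform distance scales by at most the factor βγ + γ. -/
theorem stmt14 (β γ : ℝ) (hβ0 : 0 ≤ β) (hβ1 : β < 1)
    (hγ : γ = (Real.sqrt (1 - β ^ 2))⁻¹)
    (R : EuclideanSpace ℝ (Fin 3) ≃ₗᵢ[ℝ] EuclideanSpace ℝ (Fin 3))
    (c : ℝ × EuclideanSpace ℝ (Fin 3))
    (f gf : EuclideanSpace ℝ (Fin 3) → ℝ) (fn gfn : ℕ → EuclideanSpace ℝ (Fin 3) → ℝ)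
    (hf : LipschitzWith 1 f) (hfn : ∀ n, LipschitzWith 1 (fn n))
    (hgf : LipschitzWith 1 gf) (hgfn : ∀ n, LipschitzWith 1 (gfn n))
    (hgraph : poincare β γ R c '' {p : ℝ × EuclideanSpace ℝ (Fin 3) | p.1 = f p.2}
      = {p : ℝ × EuclideanSpace ℝ (Fin 3) | p.1 = gf p.2})
    (hgraphn : ∀ n, poincare β γ R c '' {p : ℝ × EuclideanSpace ℝ (Fin 3) | p.1 = fn n p.2}
      = {p : ℝ × EuclideanSpace ℝ (Fin 3) | p.1 = gfn n p.2})
    (hconv : TendstoUniformly (fun n => fn n) f atTop) :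
    TendstoUniformly (fun n => gfn n) gf atTop ∧
    (∀ n (δ : ℝ), 0 ≤ δ → (∀ x, |fn n x - f x| ≤ δ) →
      ∀ x, |gfn n x - gf x| ≤ (β * γ + γ) * δ) := by
  have hγ0 : 0 < γ := by
    have h1 : 0 < 1 - β ^ 2 := by nlinarith
    rw [hγ]
    positivity
  have hK : 0 < β * γ + γ := by nlinarith
  have key : ∀ n (δ : ℝ), 0 ≤ δ → (∀ x, |fn n x - f x| ≤ δ) →
      ∀ x, |gfn n x - gf x| ≤ (β * γ + γ) * δ := by
    intro n δ hδ hδx x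
    have hxmem : (gf x, x) ∈ poincare β γ R c ''
        {p : ℝ × EuclideanSpace ℝ (Fin 3) | p.1 = f p.2} := by
      rw [hgraph]; exact rfl
    obtain ⟨p, hp, hgp⟩ := hxmem
    have hp' : p.1 = f p.2 := hp
    set y := p.2 with hy
    have hpeq : p = (f y, y) := by
      rw [hy, ← hp']
    rw [hpeq] at hgp
    set ε := fn n y - f y with hε
    have hεδ : |ε| ≤ δ := hδx y
    -- membership of the shifted point
    have hq : (poincare β γ R c (fn n y, y)).1 = gfn n (poincare β γ R c (fn n y, y)).2 := by
      have hmem : poincare β γ R c (fn n y, y) ∈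
          {p : ℝ × EuclideanSpace ℝ (Fin 3) | p.1 = gfn n p.2} := by
        rw [← hgraphn n]
        exact ⟨(fn n y, y), rfl, rfl⟩
      exact hmem
    set v := R (EuclideanSpace.single 0 (β * γ * ε)) with hv
    -- components of the image of the base point
    have hg1 : γ * f y + β * γ * y 0 + c.1 = gf x := congrArg Prod.fst hgp
    have hg2 : R ((WithLp.equiv 2 (Fin 3 → ℝ)).symm
        (Function.update ((WithLp.equiv 2 (Fin 3 → ℝ)) y) 0 (β * γ * f y + γ * y 0))) + c.2
        = x := congrArg Prod.snd hgp
    -- components of the image of the shifted point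
    have h1 : (poincare β γ R c (fn n y, y)).1 = gf x + γ * ε := by
      show γ * fn n y + β * γ * y 0 + c.1 = gf x + γ * ε
      rw [← hg1, hε]; ring
    have h2 : (poincare β γ R c (fn n y, y)).2 = x + v := by
      show R ((WithLp.equiv 2 (Fin 3 → ℝ)).symm
        (Function.update ((WithLp.equiv 2 (Fin 3 → ℝ)) y) 0 (β * γ * fn n y + γ * y 0))) + c.2
        = x + v
      rw [update_sub_single y (β * γ * fn n y + γ * y 0) (β * γ * f y + γ * y 0), map_add]
      have harg : β * γ * fn n y + γ * y 0 - (β * γ * f y + γ * y 0) = β * γ * ε := by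
        rw [hε]; ring
      rw [harg, ← hg2, ← hv]
      abel
    have hval : gfn n (x + v) = gf x + γ * ε := by
      rw [← h2, ← hq, h1]
    have hnormv : ‖v‖ = β * γ * |ε| := by
      rw [hv, R.norm_map, EuclideanSpace.norm_single, Real.norm_eq_abs, abs_mul,
        abs_of_nonneg (by positivity : (0:ℝ) ≤ β * γ)]
    have hlip : |gfn n x - gfn n (x + v)| ≤ ‖v‖ := by
      have h := (hgfn n).dist_le_mul x (x + v)
      rw [Real.dist_eq, NNReal.coe_one, one_mul, dist_self_add_right] at h
      exact h
    have habs : |gfn n x - gf x| ≤ (β * γ + γ) * |ε| :=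
      calc |gfn n x - gf x| ≤ |gfn n x - gfn n (x + v)| + |gfn n (x + v) - gf x| :=
            abs_sub_le _ _ _
        _ ≤ ‖v‖ + |gfn n (x + v) - gf x| := add_le_add_left hlip _
        _ = β * γ * |ε| + γ * |ε| := by
            have hc : gfn n (x + v) - gf x = γ * ε := by rw [hval]; ring
            rw [hnormv, hc, abs_mul, abs_of_nonneg hγ0.le]
        _ = (β * γ + γ) * |ε| := by ring
    calc |gfn n x - gf x| ≤ (β * γ + γ) * |ε| := habs
      _ ≤ (β * γ + γ) * δ := by gcongr
  refine ⟨?_, key⟩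
  rw [Metric.tendstoUniformly_iff] at hconv ⊢
  intro ε hε
  have hδ : 0 < ε / (2 * (β * γ + γ)) := by positivity
  filter_upwards [hconv _ hδ] with n hn x
  have h1 : ∀ x, |fn n x - f x| ≤ ε / (2 * (β * γ + γ)) := fun x => by
    have := hn x
    rw [Real.dist_eq, abs_sub_comm] at this
    exact this.le
  have h2 := key n _ hδ.le h1 x
  have h3 : (β * γ + γ) * (ε / (2 * (β * γ + γ))) = ε / 2 := by
    field_simp
  rw [Real.dist_eq, abs_sub_comm]
  rw [h3] at h2
  linarith


end
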